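/- Let n ≥ 1, let φ be a function from the finite subsets of ℝ^n to [0, ∞) such that φ(Y) = 0 whenever the vectors in Y are linearly dependent, let B ⊆ ℝ^n be a finite set, let k ≥ 0 be an integer, and let R₁ ≥ 0 be an odd integer. Then Σ_{r=0}^{R₁} (−1)^r Σ_{X ∈ 𝒮_{k,r}(B)} Σ_{Y ⊆ X, |Y| = k} φ(Y) ≤ φ(B)·1_{{|B| = k}}. -/

import Mathlib

noncomputable section

/-- A finite set `Y` of vectors of `ℝⁿ` consists of linearly independent vectors. -/
def indepFinset {n : ℕ} (Y : Finset (Fin n → ℝ)) : Prop :=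
  LinearIndependent ℝ (fun x : (Y : Set (Fin n → ℝ)) => (x : Fin n → ℝ))

/-- `rank X`: the dimension of the linear span of a finite set `X` of vectors of `ℝⁿ`. -/
def rankOf {n : ℕ} (X : Finset (Fin n → ℝ)) : ℕ :=
  Module.finrank ℝ ↥(Submodule.span ℝ (X : Set (Fin n → ℝ)))

/-- The rank deficiency `δ(X) = |X| - rank X` of a finite set `X` of vectors of `ℝⁿ`. -/
def rankDef {n : ℕ} (X : Finset (Fin n → ℝ)) : ℕ :=
  X.card - rankOf X

/-- `𝒮_{k,r}(B)`: the subsets `X ⊆ B` with `|X| = k + r` and `δ(X) ≤ 1` if `r` is odd,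
`δ(X) = 0` if `r` is even. -/
def schmidtS {n : ℕ} (k r : ℕ) (B : Finset (Fin n → ℝ)) : Finset (Finset (Fin n → ℝ)) :=
  (B.powersetCard (k + r)).filter fun X => rankDef X ≤ if Odd r then 1 else 0

lemma rankOf_le_card {n : ℕ} (X : Finset (Fin n → ℝ)) : rankOf X ≤ X.card :=
  finrank_span_finset_le_card X

lemma indep_iff_rank {n : ℕ} (X : Finset (Fin n → ℝ)) : indepFinset X ↔ rankOf X = X.card := by
  rw [indepFinset, linearIndependent_iff_card_eq_finrank_span]
  simp only [Subtype.range_coe_subtype, Set.setOf_mem_eq]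
  have hc : Fintype.card (↑X : Set (Fin n → ℝ)) = X.card := by simp
  rw [hc, Set.finrank, rankOf, eq_comm]

lemma rankDef_eq_zero_iff {n : ℕ} (X : Finset (Fin n → ℝ)) : rankDef X = 0 ↔ indepFinset X := by
  rw [rankDef, Nat.sub_eq_zero_iff_le, indep_iff_rank]
  have := rankOf_le_card X
  omega

lemma indep_mono {n : ℕ} {X X' : Finset (Fin n → ℝ)} (h : X ⊆ X') (h' : indepFinset X') :
    indepFinset X :=
  LinearIndepOn.mono (R := ℝ) (v := id) h' (Finset.coe_subset.mpr h)

lemma rankOf_mono {n : ℕ} {X X' : Finset (Fin n → ℝ)} (h : X ⊆ X') : rankOf X ≤ rankOf X' :=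
  Submodule.finrank_mono (Submodule.span_mono (Finset.coe_subset.mpr h))

lemma rankDef_insert_le {n : ℕ} {X : Finset (Fin n → ℝ)} (hX : indepFinset X)
    (b : Fin n → ℝ) : rankDef (insert b X) ≤ 1 := by
  have h1 : X.card ≤ rankOf (insert b X) := by
    rw [← (indep_iff_rank X).1 hX]; exact rankOf_mono (Finset.subset_insert b X)
  have h2 : (insert b X).card ≤ X.card + 1 := Finset.card_insert_le b X
  unfold rankDef
  omega

lemma mem_schmidtS {n : ℕ} {k r : ℕ} {B X : Finset (Fin n → ℝ)} :
    X ∈ schmidtS k r B ↔ X ⊆ B ∧ X.card = k + r ∧ rankDef X ≤ if Odd r then 1 else 0 := by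
  simp only [schmidtS, Finset.mem_filter, Finset.mem_powersetCard]
  tauto


open scoped symmDiff

/-- **Proposition 3.1, lower bound.** If `φ ≥ 0` vanishes on linearly dependent sets,
`B ⊆ ℝⁿ` is finite, `k ≥ 0` and `R₁ ≥ 0` is odd, then
`Σ_{r=0}^{R₁} (-1)ʳ Σ_{X ∈ 𝒮_{k,r}(B)} Σ_{Y ⊆ X, |Y| = k} φ(Y) ≤ φ(B)·1_{|B| = k}`. -/
theorem schmidt_sieve_lower
    (n : ℕ) (hn : 1 ≤ n)
    (φ : Finset (Fin n → ℝ) → ℝ)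
    (hφ0 : ∀ Y, 0 ≤ φ Y)
    (hφdep : ∀ Y, ¬ indepFinset Y → φ Y = 0)
    (B : Finset (Fin n → ℝ)) (k : ℕ) (R₁ : ℕ) (hR₁ : Odd R₁) :
    ∑ r ∈ Finset.range (R₁ + 1), (-1 : ℝ) ^ r *
        ∑ X ∈ schmidtS k r B, ∑ Y ∈ X.powersetCard k, φ Y
      ≤ φ B * (if B.card = k then 1 else 0) := by
  classical
  set N : Finset (Fin n → ℝ) → ℕ → ℕ :=
    fun Y r => ((schmidtS k r B).filter (fun X => Y ⊆ X)).card with hN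
  -- Step 1: rewrite the LHS as a sum over Y
  have step1 : ∑ r ∈ Finset.range (R₁ + 1), (-1 : ℝ) ^ r *
        ∑ X ∈ schmidtS k r B, ∑ Y ∈ X.powersetCard k, φ Y
      = ∑ Y ∈ B.powersetCard k,
          (∑ r ∈ Finset.range (R₁ + 1), (-1 : ℝ) ^ r * (N Y r : ℝ)) * φ Y := by
    have h1 : ∀ r, (-1 : ℝ) ^ r * ∑ X ∈ schmidtS k r B, ∑ Y ∈ X.powersetCard k, φ Y
        = ∑ Y ∈ B.powersetCard k, ∑ X ∈ schmidtS k r B,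
            (-1 : ℝ) ^ r * (if Y ⊆ X then φ Y else 0) := by
      intro r
      rw [Finset.mul_sum, Finset.sum_comm]
      refine Finset.sum_congr rfl fun X hX => ?_
      have hXB : X ⊆ B := (mem_schmidtS.1 hX).1
      have hpc : X.powersetCard k = (B.powersetCard k).filter (· ⊆ X) := by
        ext Y
        simp only [Finset.mem_powersetCard, Finset.mem_filter]
        exact ⟨fun ⟨h1, h2⟩ => ⟨⟨h1.trans hXB, h2⟩, h1⟩, fun ⟨⟨_, h2⟩, h3⟩ => ⟨h3, h2⟩⟩
      rw [hpc, Finset.sum_filter, Finset.mul_sum]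
    calc ∑ r ∈ Finset.range (R₁ + 1), (-1 : ℝ) ^ r *
            ∑ X ∈ schmidtS k r B, ∑ Y ∈ X.powersetCard k, φ Y
        = ∑ r ∈ Finset.range (R₁ + 1), ∑ Y ∈ B.powersetCard k, ∑ X ∈ schmidtS k r B,
            (-1 : ℝ) ^ r * (if Y ⊆ X then φ Y else 0) := by
          exact Finset.sum_congr rfl fun r _ => h1 r
      _ = ∑ Y ∈ B.powersetCard k, ∑ r ∈ Finset.range (R₁ + 1), ∑ X ∈ schmidtS k r B,
            (-1 : ℝ) ^ r * (if Y ⊆ X then φ Y else 0) := Finset.sum_comm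
      _ = ∑ Y ∈ B.powersetCard k,
            (∑ r ∈ Finset.range (R₁ + 1), (-1 : ℝ) ^ r * (N Y r : ℝ)) * φ Y := by
          refine Finset.sum_congr rfl fun Y _ => ?_
          rw [Finset.sum_mul]
          refine Finset.sum_congr rfl fun r _ => ?_
          rw [← Finset.mul_sum, ← Finset.sum_filter, Finset.sum_const, nsmul_eq_mul, hN,
            mul_assoc]
  rw [step1]
  -- Step 2: key bound for independent Y strictly contained in B
  have key : ∀ Y, Y ⊆ B → Y.card = k → indepFinset Y → Y ≠ B →
      ∑ r ∈ Finset.range (R₁ + 1), (-1 : ℝ) ^ r * (N Y r : ℝ) ≤ 0 := by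
    intro Y hYB hYk hYind hYne
    obtain ⟨b, hbB, hbY⟩ :=
      Finset.exists_of_ssubset (Finset.ssubset_iff_subset_ne.mpr ⟨hYB, hYne⟩)
    set T : ℕ → Finset (Finset (Fin n → ℝ)) :=
      fun r => (schmidtS k r B).filter (fun X => Y ⊆ X) with hT
    have hTcard : ∀ r X, X ∈ T r → X.card = k + r := by
      intro r X hX
      exact (mem_schmidtS.1 (Finset.mem_filter.1 hX).1).2.1
    have hdisj : ∀ r r', r ≠ r' → Disjoint (T r) (T r') := by
      intro r r' hrr'
      rw [Finset.disjoint_left]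
      intro X h1 h2
      exact hrr' (by have := hTcard r X h1; have := hTcard r' X h2; omega)
    set Ev := (Finset.range (R₁ + 1)).filter (fun r => Even r) with hEv
    set Od := (Finset.range (R₁ + 1)).filter (fun r => ¬ Even r) with hOd
    have hEcard : ∑ r ∈ Ev, N Y r = (Ev.biUnion T).card :=
      (Finset.card_biUnion fun r _ r' _ h => hdisj r r' h).symm
    have hOcard : ∑ r ∈ Od, N Y r = (Od.biUnion T).card :=
      (Finset.card_biUnion fun r _ r' _ h => hdisj r r' h).symm
    -- the injection X ↦ X ∆ {b}
    have hsd_mem : ∀ X : Finset (Fin n → ℝ), b ∈ X → X ∆ {b} = X.erase b := by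
      intro X hb
      ext x
      simp only [Finset.mem_symmDiff, Finset.mem_singleton, Finset.mem_erase]
      constructor
      · rintro (⟨h1, h2⟩ | ⟨h1, h2⟩)
        · exact ⟨h2, h1⟩
        · exact absurd (h1 ▸ hb) h2
      · rintro ⟨h1, h2⟩; exact Or.inl ⟨h2, h1⟩
    have hsd_not : ∀ X : Finset (Fin n → ℝ), b ∉ X → X ∆ {b} = insert b X := by
      intro X hb
      ext x
      simp only [Finset.mem_symmDiff, Finset.mem_singleton, Finset.mem_insert]
      constructor
      · rintro (⟨h1, h2⟩ | ⟨h1, h2⟩)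
        · exact Or.inr h1
        · exact Or.inl h1
      · rintro (h1 | h1)
        · exact Or.inr ⟨h1, h1 ▸ hb⟩
        · exact Or.inl ⟨h1, fun h => hb (h ▸ h1)⟩
    have hmaps : ∀ X ∈ Ev.biUnion T, X ∆ {b} ∈ Od.biUnion T := by
      intro X hX
      simp only [Finset.mem_biUnion, hEv, hOd, Finset.mem_filter, Finset.mem_range] at hX ⊢
      obtain ⟨r, ⟨hrR, hre⟩, hXT⟩ := hX
      obtain ⟨hXS, hYX⟩ := Finset.mem_filter.1 hXT
      obtain ⟨hXB, hXc, hXd⟩ := mem_schmidtS.1 hXS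
      have hXind : indepFinset X := by
        rw [← rankDef_eq_zero_iff]
        have : ¬ Odd r := Nat.not_odd_iff_even.2 hre
        rw [if_neg this] at hXd
        omega
      by_cases hb : b ∈ X
      · -- X ∆ {b} = X.erase b, goes to level r - 1
        have hr1 : 1 ≤ r := by
          by_contra h
          have hr0 : r = 0 := by omega
          have : X = Y := (Finset.eq_of_subset_of_card_le hYX (by omega)).symm
          exact hbY (this ▸ hb)
        refine ⟨r - 1, ⟨by omega, ?_⟩, ?_⟩
        · exact Nat.not_even_iff_odd.2 (Nat.Even.sub_odd hr1 hre odd_one)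
        · rw [hsd_mem X hb]
          refine Finset.mem_filter.2 ⟨mem_schmidtS.2 ⟨(Finset.erase_subset b X).trans hXB,
            ?_, ?_⟩, Finset.subset_erase.2 ⟨hYX, hbY⟩⟩
          · rw [Finset.card_erase_of_mem hb]; omega
          · have : rankDef (X.erase b) = 0 :=
              (rankDef_eq_zero_iff _).2 (indep_mono (Finset.erase_subset b X) hXind)
            omega
      · -- X ∆ {b} = insert b X, goes to level r + 1
        have hrR' : r + 1 ≤ R₁ := by
          rcases hR₁ with ⟨t, ht⟩
          rcases hre with ⟨s, hs⟩
          omega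
        refine ⟨r + 1, ⟨by omega, Nat.not_even_iff_odd.2 (Even.add_one hre)⟩, ?_⟩
        rw [hsd_not X hb]
        refine Finset.mem_filter.2 ⟨mem_schmidtS.2 ⟨Finset.insert_subset hbB hXB, ?_, ?_⟩,
          hYX.trans (Finset.subset_insert b X)⟩
        · rw [Finset.card_insert_of_notMem hb]; omega
        · rw [if_pos (Even.add_one hre)]
          exact rankDef_insert_le hXind b
    have hinj : Set.InjOn (fun X : Finset (Fin n → ℝ) => X ∆ {b}) (Ev.biUnion T) := by
      intro X1 _ X2 _ h
      have := congrArg (fun Z : Finset (Fin n → ℝ) => Z ∆ {b}) h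
      simpa [symmDiff_symmDiff_cancel_right] using this
    have hcard_le : (Ev.biUnion T).card ≤ (Od.biUnion T).card :=
      Finset.card_le_card_of_injOn _ hmaps hinj
    -- assemble
    have hsplit : ∑ r ∈ Finset.range (R₁ + 1), (-1 : ℝ) ^ r * (N Y r : ℝ)
        = (∑ r ∈ Ev, (-1 : ℝ) ^ r * (N Y r : ℝ)) + ∑ r ∈ Od, (-1 : ℝ) ^ r * (N Y r : ℝ) :=
      (Finset.sum_filter_add_sum_filter_not _ _ _).symm
    have he : ∑ r ∈ Ev, (-1 : ℝ) ^ r * (N Y r : ℝ) = ((Ev.biUnion T).card : ℝ) := by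
      rw [← hEcard]
      push_cast
      refine Finset.sum_congr rfl fun r hr => ?_
      have : Even r := (Finset.mem_filter.1 hr).2
      rw [this.neg_one_pow, one_mul]
    have ho : ∑ r ∈ Od, (-1 : ℝ) ^ r * (N Y r : ℝ) = -((Od.biUnion T).card : ℝ) := by
      rw [← hOcard]
      push_cast
      rw [← Finset.sum_neg_distrib]
      refine Finset.sum_congr rfl fun r hr => ?_
      have : Odd r := Nat.not_even_iff_odd.1 (Finset.mem_filter.1 hr).2
      rw [this.neg_one_pow, neg_one_mul]
    rw [hsplit, he, ho]
    have : ((Ev.biUnion T).card : ℝ) ≤ ((Od.biUnion T).card : ℝ) := Nat.cast_le.2 hcard_le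
    linarith
  -- Step 3: conclude
  by_cases hBk : B.card = k
  · rw [if_pos hBk, mul_one]
    have hPB : B.powersetCard k = {B} := by rw [← hBk, Finset.powersetCard_self]
    rw [hPB, Finset.sum_singleton]
    have hcB : ∑ r ∈ Finset.range (R₁ + 1), (-1 : ℝ) ^ r * (N B r : ℝ) ≤ 1 := by
      have hzero : ∀ r ∈ Finset.range (R₁ + 1), r ≠ 0 → (-1 : ℝ) ^ r * (N B r : ℝ) = 0 := by
        intro r _ hr0
        have : (schmidtS k r B).filter (fun X => B ⊆ X) = ∅ := by
          rw [Finset.eq_empty_iff_forall_notMem]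
          intro X hX
          obtain ⟨hXS, hBX⟩ := Finset.mem_filter.1 hX
          obtain ⟨hXB, hXc, _⟩ := mem_schmidtS.1 hXS
          have : X = B := Finset.Subset.antisymm hXB hBX
          rw [this] at hXc
          omega
        rw [hN]
        simp [this]
      rw [Finset.sum_eq_single_of_mem 0 (Finset.mem_range.2 (by omega)) hzero]
      have hle1 : N B 0 ≤ 1 := by
        rw [hN]
        refine Finset.card_le_one.2 fun X1 h1 X2 h2 => ?_
        have e1 : X1 = B := Finset.Subset.antisymm
          (mem_schmidtS.1 (Finset.mem_filter.1 h1).1).1 (Finset.mem_filter.1 h1).2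
        have e2 : X2 = B := Finset.Subset.antisymm
          (mem_schmidtS.1 (Finset.mem_filter.1 h2).1).1 (Finset.mem_filter.1 h2).2
        rw [e1, e2]
      have : ((N B 0 : ℕ) : ℝ) ≤ 1 := by exact_mod_cast hle1
      simpa using this
    calc (∑ r ∈ Finset.range (R₁ + 1), (-1 : ℝ) ^ r * (N B r : ℝ)) * φ B
        ≤ 1 * φ B := mul_le_mul_of_nonneg_right hcB (hφ0 B)
      _ = φ B := one_mul _
  · rw [if_neg hBk, mul_zero]
    refine Finset.sum_nonpos fun Y hY => ?_
    obtain ⟨hYB, hYk⟩ := Finset.mem_powersetCard.1 hY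
    by_cases hi : indepFinset Y
    · have hne : Y ≠ B := fun h => hBk (by rw [← h, hYk])
      have h1 := key Y hYB hYk hi hne
      have := mul_le_mul_of_nonneg_right h1 (hφ0 Y)
      simpa using this
    · rw [hφdep Y hi, mul_zero]
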